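/- Let X_{k,h} be the bounded density shift with h(n) = nα + e(n), where α > 0 and e : ℕ → ℕ is increasing. Then (X_{k,h}, T) has non-uniform specification with gap bounds f(n) := 2e(n)/α. Concretely: for any words w₁,…,w_j in the language of X_{k,h} with lengths n₁,…,n_j, and any m₁,…,m_{j−1} with m_i ≥ max(2e(n_i)/α, 2e(n_{i+1})/α), the word w₁0^{m₁}w₂⋯0^{m_{j−1}}w_j belongs to the language of X_{k,h}. -/

import Mathlib

open Filter Topology MeasureTheory

/-- The bounded density shift: points `x ∈ {0,…,k}^ℤ` with all window sums bounded by `h`. -/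
def BDShift (k : ℕ) (h : ℕ → ℝ) : Set (ℤ → ℕ) :=
  {x | (∀ i, x i ≤ k) ∧ ∀ (i : ℤ) (n : ℕ), ((∑ j ∈ Finset.range n, x (i + j) : ℕ) : ℝ) ≤ h n}

/-- A finite word is in the language of the bounded density shift if it appears in some point. -/
def InBDLang (k : ℕ) (h : ℕ → ℝ) (w : List ℕ) : Prop :=
  ∃ x ∈ BDShift k h, ∃ i : ℤ, ∀ j < w.length, x (i + j) = w.getD j 0

/-- All infix (contiguous subword) sums of `W` are bounded by `ℓ·α + e ℓ`. -/
def GoodW (α : ℝ) (e : ℕ → ℕ) (W : List ℕ) : Prop :=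
  ∀ u : List ℕ, u <:+: W → (u.sum : ℝ) ≤ u.length * α + e u.length

/-- All suffix sums of `W` are bounded by `ℓ·α + t`. -/
def SufW (α : ℝ) (t : ℝ) (W : List ℕ) : Prop :=
  ∀ u : List ℕ, u <:+ W → (u.sum : ℝ) ≤ u.length * α + t

lemma list_sum_getD (l : List ℕ) : l.sum = ∑ i ∈ Finset.range l.length, l.getD i 0 := by
  induction l with
  | nil => simp
  | cons a t ih =>
    rw [List.length_cons, Finset.sum_range_succ']
    simp [List.sum_cons, ih, Nat.add_comm]

lemma infix_append_decomp {u l₁ l₂ : List ℕ} (hu : u <:+: l₁ ++ l₂) :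
    u <:+: l₁ ∨ u <:+: l₂ ∨ ∃ s t, u = s ++ t ∧ s <:+ l₁ ∧ t <+: l₂ := by
  obtain ⟨p, q, hpq⟩ := hu
  rw [List.append_assoc] at hpq
  rcases List.append_eq_append_iff.mp hpq with ⟨a, ha1, ha2⟩ | ⟨c, hc1, hc2⟩
  · rcases List.append_eq_append_iff.mp ha2 with ⟨b, hb1, hb2⟩ | ⟨d, hd1, hd2⟩
    · left
      exact ⟨p, b, by rw [List.append_assoc, ← hb1, ← ha1]⟩
    · right; right
      exact ⟨a, d, hd1, ⟨p, ha1.symm⟩, ⟨q, hd2.symm⟩⟩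
  · right; left
    exact ⟨c, q, by rw [hc2, List.append_assoc]⟩

lemma suffix_append_decomp {u l₁ l₂ : List ℕ} (hu : u <:+ l₁ ++ l₂) :
    u <:+ l₂ ∨ ∃ s, u = s ++ l₂ ∧ s <:+ l₁ := by
  obtain ⟨p, hp⟩ := hu
  rcases List.append_eq_append_iff.mp hp with ⟨a, ha1, ha2⟩ | ⟨c, hc1, hc2⟩
  · right; exact ⟨a, ha2, ⟨p, ha1.symm⟩⟩
  · left; exact ⟨c, hc2.symm⟩

lemma sum_zero_of_subset_replicate {u : List ℕ} {mm : ℕ}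
    (hs : u ⊆ List.replicate mm 0) : u.sum = 0 :=
  List.sum_eq_zero fun x hx => List.eq_of_mem_replicate (hs hx)

lemma cast_sum_append (l l' : List ℕ) :
    (((l ++ l').sum : ℕ) : ℝ) = (l.sum : ℝ) + (l'.sum : ℝ) := by
  rw [List.sum_append, Nat.cast_add]

lemma cast_length_append (l l' : List ℕ) :
    (((l ++ l').length : ℕ) : ℝ) = (l.length : ℝ) + (l'.length : ℝ) := by
  rw [List.length_append, Nat.cast_add]

lemma sufW_of_goodW {α : ℝ} {e : ℕ → ℕ} {W : List ℕ} (he : Monotone e)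
    (hg : GoodW α e W) : SufW α (e W.length) W := by
  intro u hu
  refine (hg u hu.isInfix).trans (add_le_add_right ?_ _)
  exact_mod_cast Nat.cast_le.mpr (he hu.length_le)

/-- Appending `A ++ 0^mm ++ B` preserves goodness, given suffix credit `tA ≤ mm·α` for `A`. -/
lemma goodW_append {α : ℝ} {e : ℕ → ℕ} (hα : 0 < α) (he : Monotone e)
    {A B : List ℕ} {mm : ℕ} {tA : ℝ}
    (hA : GoodW α e A) (hsA : SufW α tA A) (hB : GoodW α e B) (htm : tA ≤ mm * α) :
    GoodW α e (A ++ List.replicate mm 0 ++ B) ∧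
      SufW α (e B.length) (A ++ List.replicate mm 0 ++ B) := by
  have hαe : ∀ a b : ℕ, a ≤ b → ((e a : ℝ)) ≤ (e b : ℝ) := fun a b hab =>
    Nat.cast_le.mpr (he hab)
  have he0 : ∀ n : ℕ, (0:ℝ) ≤ (e n : ℝ) := fun n => Nat.cast_nonneg _
  -- key: suffixes of `A ++ 0^mm` have sums at most `length * α`
  have hsAR : ∀ s : List ℕ, s <:+ A ++ List.replicate mm 0 → (s.sum : ℝ) ≤ s.length * α := by
    intro s hs
    rcases suffix_append_decomp hs with hs' | ⟨s', rfl, hs'⟩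
    · have h0 : s.sum = 0 := sum_zero_of_subset_replicate hs'.subset
      rw [h0]
      push_cast
      positivity
    · have h1 : (s'.sum : ℝ) ≤ s'.length * α + tA := hsA s' hs'
      have h2 : (((s' ++ List.replicate mm 0).sum : ℕ) : ℝ) = (s'.sum : ℝ) := by
        rw [cast_sum_append]
        simp
      have h3 : (((s' ++ List.replicate mm 0).length : ℕ) : ℝ) = (s'.length : ℝ) + mm := by
        rw [cast_length_append]
        simp
      rw [h2, h3]
      nlinarith
  constructor
  · -- goodness of the concatenation
    intro u hu
    rcases infix_append_decomp hu with hu' | hu' | ⟨s, t, rfl, hsuf, hpre⟩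
    · -- infix of A ++ 0^mm
      rcases infix_append_decomp hu' with hu'' | hu'' | ⟨s, t, rfl, hsuf, hpre⟩
      · exact hA u hu''
      · have h0 : u.sum = 0 := sum_zero_of_subset_replicate hu''.subset
        rw [h0]
        have := he0 u.length
        push_cast
        positivity
      · have h0 : (t.sum : ℝ) = 0 := by
          rw [sum_zero_of_subset_replicate hpre.subset]; simp
        have h1 := hA s hsuf.isInfix
        have h4 : (e s.length : ℝ) ≤ (e (s ++ t).length : ℝ) := by
          apply hαe; rw [List.length_append]; omega
        have h6 : (0:ℝ) ≤ (t.length : ℝ) * α := by positivity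
        rw [cast_sum_append, cast_length_append, h0]
        linarith
    · exact hB u hu'
    · have h1 : (s.sum : ℝ) ≤ s.length * α := hsAR s hsuf
      have h2 := hB t hpre.isInfix
      have h3 : (e t.length : ℝ) ≤ (e (s ++ t).length : ℝ) := by
        apply hαe; rw [List.length_append]; omega
      rw [cast_sum_append, cast_length_append]
      linarith
  · -- suffix credit of the concatenation
    intro u hu
    rcases suffix_append_decomp hu with hu' | ⟨s, rfl, hsuf⟩
    · have h1 := hB u hu'.isInfix
      have h2 : (e u.length : ℝ) ≤ (e B.length : ℝ) := hαe _ _ hu'.length_le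
      linarith
    · have h1 : (s.sum : ℝ) ≤ s.length * α := hsAR s hsuf
      have h2 : (B.sum : ℝ) ≤ B.length * α + e B.length := hB B (List.infix_refl B)
      rw [cast_sum_append, cast_length_append]
      linarith

/-- Language membership implies all entries bounded by `k` and all infix sums good. -/
lemma goodW_of_lang {k : ℕ} {h : ℕ → ℝ} {α : ℝ} {e : ℕ → ℕ}
    (hh : ∀ n : ℕ, h n = n * α + e n) {w : List ℕ} (hw : InBDLang k h w) :
    (∀ a ∈ w, a ≤ k) ∧ GoodW α e w := by
  obtain ⟨x, ⟨hxk, hxs⟩, i, hxw⟩ := hw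
  constructor
  · intro a ha
    obtain ⟨n, hn, rfl⟩ := List.mem_iff_getElem.mp ha
    have h1 := hxw n hn
    rw [List.getD_eq_getElem _ _ hn] at h1
    rw [← h1]
    exact hxk _
  · intro u hu
    obtain ⟨p, q, hpq⟩ := hu
    have hgd : ∀ jj : ℕ, jj < u.length → u.getD jj 0 = x (i + p.length + jj) := by
      intro jj hjj
      have h1 : p.length + jj < w.length := by
        rw [← hpq]
        simp only [List.length_append]
        omega
      have h2 := hxw (p.length + jj) h1
      have h3 : w.getD (p.length + jj) 0 = u.getD jj 0 := by
        rw [← hpq, List.append_assoc,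
          List.getD_append_right p (u ++ q) 0 (p.length + jj) (by omega),
          Nat.add_sub_cancel_left, List.getD_append u q 0 jj hjj]
      rw [← h3, ← h2]
      congr 1
      push_cast
      ring
    have hsum : (u.sum : ℕ) = ∑ jj ∈ Finset.range u.length, x (i + p.length + jj) := by
      rw [list_sum_getD u]
      exact Finset.sum_congr rfl fun jj hjj => hgd jj (Finset.mem_range.mp hjj)
    have h4 := hxs (i + p.length) u.length
    rw [hh] at h4
    calc (u.sum : ℝ) = ((∑ jj ∈ Finset.range u.length, x (i + p.length + jj) : ℕ) : ℝ) := by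
          rw [hsum]
      _ ≤ u.length * α + e u.length := h4

/-- Conversely, entry bounds plus goodness give language membership. -/
lemma lang_of_goodW {k : ℕ} {h : ℕ → ℝ} {α : ℝ} {e : ℕ → ℕ} (hα : 0 < α) (he : Monotone e)
    (hh : ∀ n : ℕ, h n = n * α + e n) {W : List ℕ}
    (hk : ∀ a ∈ W, a ≤ k) (hg : GoodW α e W) : InBDLang k h W := by
  classical
  set x : ℤ → ℕ := fun i => if 0 ≤ i then W.getD i.toNat 0 else 0 with hxdef
  have hgetD : ∀ n : ℕ, W.getD n 0 ≤ k := by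
    intro n
    by_cases hn : n < W.length
    · rw [List.getD_eq_getElem _ _ hn]
      exact hk _ (List.getElem_mem hn)
    · rw [List.getD_eq_default _ _ (le_of_not_gt hn)]
      exact Nat.zero_le k
  have hB1 : ∀ a n : ℕ,
      ((∑ jj ∈ Finset.range n, W.getD (a + jj) 0 : ℕ) : ℝ) ≤ n * α + e n := by
    intro a n
    set u : List ℕ := (W.drop a).take n with hudef
    have hulen : u.length = min n (W.length - a) := by simp [hudef]
    have hule : u.length ≤ n := by omega
    have huinf : u <:+: W := by
      refine ⟨W.take a, (W.drop a).drop n, ?_⟩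
      rw [List.append_assoc, hudef, List.take_append_drop, List.take_append_drop]
    have hgdu : ∀ jj : ℕ, jj < u.length → u.getD jj 0 = W.getD (a + jj) 0 := by
      intro jj hjj
      have hjW : a + jj < W.length := by omega
      have hjd : jj < (W.drop a).length := by
        rw [List.length_drop]; omega
      rw [List.getD_eq_getElem u 0 hjj, List.getD_eq_getElem W 0 hjW]
      simp only [hudef, List.getElem_take, List.getElem_drop]
    have hsum : (∑ jj ∈ Finset.range n, W.getD (a + jj) 0) = u.sum := by
      rw [list_sum_getD u]
      refine (Finset.sum_subset (Finset.range_subset_range.mpr hule) ?_).symm.trans ?_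
      · intro jj hjj hjj'
        have h1 : jj < n := Finset.mem_range.mp hjj
        have h2 : ¬ jj < u.length := fun hc => hjj' (Finset.mem_range.mpr hc)
        exact List.getD_eq_default _ _ (by omega)
      · exact Finset.sum_congr rfl fun jj hjj => (hgdu jj (Finset.mem_range.mp hjj)).symm
    have hbound := hg u huinf
    have hmono : (u.length : ℝ) * α + e u.length ≤ n * α + e n := by
      have h1 : (u.length : ℝ) * α ≤ n * α := by
        apply mul_le_mul_of_nonneg_right _ hα.le
        exact_mod_cast hule
      have h2 : (e u.length : ℝ) ≤ e n := Nat.cast_le.mpr (he hule)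
      linarith
    rw [hsum]
    exact hbound.trans hmono
  refine ⟨x, ⟨?_, ?_⟩, 0, ?_⟩
  · intro i
    rw [hxdef]
    dsimp only
    split_ifs
    · exact hgetD _
    · exact Nat.zero_le k
  · intro i n
    rcases le_or_gt 0 i with hi | hi
    · have hterm : ∀ jj ∈ Finset.range n, x (i + jj) = W.getD (i.toNat + jj) 0 := by
        intro jj _
        rw [hxdef]
        dsimp only
        rw [if_pos (by positivity)]
        congr 1
        rw [Int.toNat_add hi (Int.natCast_nonneg jj), Int.toNat_natCast]
      rw [Finset.sum_congr rfl hterm, hh]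
      exact hB1 i.toNat n
    · rcases le_or_gt (i + n) 0 with hn0 | hn0
      · have hterm : ∀ jj ∈ Finset.range n, x (i + jj) = 0 := by
          intro jj hjj
          have h1 : (jj : ℤ) < n := by exact_mod_cast Finset.mem_range.mp hjj
          rw [hxdef]
          dsimp only
          rw [if_neg (by omega)]
        rw [Finset.sum_congr rfl hterm, Finset.sum_const_zero, hh]
        have h2 := Nat.cast_nonneg (α := ℝ) (e n)
        push_cast
        positivity
      · set b : ℕ := (-i).toNat with hbdef
        have hb : (b : ℤ) = -i := Int.toNat_of_nonneg (by omega)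
        have hbn : b ≤ n := by
          have : (b : ℤ) ≤ n := by omega
          exact_mod_cast this
        have hsplit : ∑ jj ∈ Finset.range n, x (i + jj)
            = ∑ jj ∈ Finset.Ico 0 b, x (i + jj) + ∑ jj ∈ Finset.Ico b n, x (i + jj) := by
          rw [Finset.sum_Ico_consecutive _ (Nat.zero_le b) hbn, Finset.range_eq_Ico]
        have hz : ∑ jj ∈ Finset.Ico 0 b, x (i + jj) = 0 := by
          apply Finset.sum_eq_zero
          intro jj hjj
          have h1 : jj < b := (Finset.mem_Ico.mp hjj).2
          have h2 : (jj : ℤ) < b := by exact_mod_cast h1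
          rw [hxdef]
          dsimp only
          rw [if_neg (by omega)]
        have hre : ∑ jj ∈ Finset.Ico b n, x (i + jj)
            = ∑ t ∈ Finset.range (n - b), W.getD (0 + t) 0 := by
          rw [Finset.sum_Ico_eq_sum_range]
          refine Finset.sum_congr rfl fun t _ => ?_
          have h1 : i + (b + t : ℕ) = (t : ℤ) := by push_cast; omega
          rw [hxdef]
          dsimp only
          rw [h1, if_pos (Int.natCast_nonneg t), Int.toNat_natCast, Nat.zero_add]
        rw [hsplit, hz, hre, zero_add, hh]
        calc ((∑ t ∈ Finset.range (n - b), W.getD (0 + t) 0 : ℕ) : ℝ)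
            ≤ (n - b : ℕ) * α + e (n - b) := hB1 0 (n - b)
          _ ≤ n * α + e n := by
              have h1 : ((n - b : ℕ) : ℝ) * α ≤ n * α := by
                apply mul_le_mul_of_nonneg_right _ hα.le
                exact_mod_cast Nat.sub_le n b
              have h2 : (e (n - b) : ℝ) ≤ e n := Nat.cast_le.mpr (he (Nat.sub_le n b))
              linarith
  · intro jj hjj
    rw [hxdef]
    dsimp only
    rw [zero_add, if_pos (Int.natCast_nonneg jj), Int.toNat_natCast]

/-- Bounded density shifts with `h n = n·α + e n` (`e` increasing) have non-uniform
specification with gap bounds `2·e(n)/α`: words of the language separated by blocks of `0`s of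
length at least `max (2 e(nᵢ)/α) (2 e(nᵢ₊₁)/α)` concatenate to a word of the language. -/
theorem bdshift_nonUnifSpec (k : ℕ) (h : ℕ → ℝ) (α : ℝ) (hα : 0 < α)
    (e : ℕ → ℕ) (he : Monotone e) (hh : ∀ n : ℕ, h n = n * α + e n)
    (j : ℕ) (w : ℕ → List ℕ) (hw : ∀ i < j, InBDLang k h (w i))
    (m : ℕ → ℕ)
    (hm : ∀ i, i + 1 < j →
      max (2 * (e (w i).length : ℝ) / α) (2 * (e (w (i + 1)).length : ℝ) / α) ≤ (m i : ℝ)) :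
    InBDLang k h
      (((List.range j).map
        (fun i => w i ++ List.replicate (if i + 1 < j then m i else 0) 0)).flatten) := by
  set T : ℕ → List ℕ := fun n =>
    ((List.range n).map (fun i => w i ++ List.replicate (if i + 1 < n then m i else 0) 0)).flatten
    with hTdef
  set F : ℕ → List ℕ := fun n =>
    ((List.range n).map (fun i => w i ++ List.replicate (m i) 0)).flatten with hFdef
  have hTF : ∀ n : ℕ, T (n + 1) = F n ++ w n := by
    intro n
    rw [hTdef, hFdef]
    dsimp only
    rw [List.range_succ, List.map_append, List.flatten_append]
    congr 1
    · congr 1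
      refine List.map_congr_left fun i hi => ?_
      have : i < n := List.mem_range.mp hi
      rw [if_pos (by omega)]
    · simp
  have hFsucc : ∀ n : ℕ, F (n + 1) = F n ++ (w n ++ List.replicate (m n) 0) := by
    intro n
    rw [hFdef]
    dsimp only
    rw [List.range_succ, List.map_append, List.flatten_append]
    simp
  have hTstep : ∀ n : ℕ, T (n + 2) = T (n + 1) ++ List.replicate (m n) 0 ++ w (n + 1) := by
    intro n
    rw [hTF (n + 1), hFsucc n, hTF n]
    simp [List.append_assoc]
  have hT1 : T 1 = w 0 := by
    rw [hTF 0, hFdef]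
    simp
  have key : ∀ n : ℕ, n + 1 ≤ j →
      (∀ a ∈ T (n + 1), a ≤ k) ∧ GoodW α e (T (n + 1)) ∧
        SufW α (e (w n).length) (T (n + 1)) := by
    intro n
    induction n with
    | zero =>
      intro h1
      rw [hT1]
      obtain ⟨hk0, hg0⟩ := goodW_of_lang hh (hw 0 (by omega))
      exact ⟨hk0, hg0, sufW_of_goodW he hg0⟩
    | succ t ih =>
      intro h1
      obtain ⟨ihk, ihg, ihs⟩ := ih (by omega)
      obtain ⟨hkB, hgB⟩ := goodW_of_lang hh (hw (t + 1) (by omega))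
      have hmt := hm t (by omega)
      have htm : (e (w t).length : ℝ) ≤ (m t : ℕ) * α := by
        have h2 : 2 * (e (w t).length : ℝ) / α ≤ (m t : ℝ) :=
          le_trans (le_max_left _ _) hmt
        rw [div_le_iff₀ hα] at h2
        have h3 : (0:ℝ) ≤ (e (w t).length : ℝ) := Nat.cast_nonneg _
        nlinarith
      obtain ⟨hgood, hsuf⟩ := goodW_append hα he ihg ihs hgB htm
      rw [hTstep t]
      refine ⟨?_, hgood, hsuf⟩
      intro a ha
      rcases List.mem_append.mp ha with ha' | ha'
      · rcases List.mem_append.mp ha' with ha'' | ha''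
        · exact ihk a ha''
        · rw [List.eq_of_mem_replicate ha'']
          exact Nat.zero_le k
      · exact hkB a ha'
  show InBDLang k h (T j)
  rcases Nat.eq_zero_or_pos j with rfl | hj
  · have hT0 : T 0 = [] := by rw [hTdef]; simp
    rw [hT0]
    refine lang_of_goodW hα he hh (by simp) ?_
    intro u hu
    have : u = [] := List.eq_nil_of_infix_nil hu
    subst this
    simp only [List.sum_nil, List.length_nil]
    have := Nat.cast_nonneg (α := ℝ) (e 0)
    push_cast
    linarith
  · obtain ⟨n, rfl⟩ := Nat.exists_eq_add_of_lt hj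
    have := key (0 + n) (by omega)
    rw [show 0 + n + 1 = n + 1 by omega] at *
    exact lang_of_goodW hα he hh this.1 this.2.1
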